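/- For every real number a ≥ 0, the set of complex numbers λ ∈ ℂ ∖ {σ₁, …, σ_m} satisfying λ𝓕(λ) = a has exactly m+1 elements, and every element of this set is a nonnegative real number. In particular, any complex λ ∉ {σ₁, …, σ_m} with λ𝓕(λ) real and nonnegative is itself a nonnegative real number. -/

import Mathlib

/-!
STATEMENT 8: for every real a ≥ 0, the set of complex λ ∉ {σ_1,…,σ_m} with
λ𝓕(λ) = a has exactly m+1 elements, all of which are nonnegative reals; in
particular any complex λ ∉ {σ_j} with λ𝓕(λ) real and nonnegative is a
nonnegative real. (Indices are 0-based.)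
-/


open Finset Set Filter

namespace CRNR

noncomputable def g (m : ℕ) (σ ρ : ℕ → ℝ) (x : ℝ) : ℝ :=
  x + ∑ j ∈ Finset.range m, σ j * ρ j * (x / (σ j - x))

variable {m : ℕ} {σ ρ : ℕ → ℝ}

lemma sig_lt (hσmono : ∀ j, j + 1 < m → σ j < σ (j + 1)) :
    ∀ i j, i < j → j < m → σ i < σ j := by
  intro i j hij hjm
  induction j with
  | zero => omega
  | succ k ih =>
    rcases Nat.lt_succ_iff_lt_or_eq.1 hij with h | h
    · exact (ih h (by omega)).trans (hσmono k (by omega))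
    · subst h; exact hσmono i (by omega)

lemma sig_le (hσmono : ∀ j, j + 1 < m → σ j < σ (j + 1)) :
    ∀ i j, i ≤ j → j < m → σ i ≤ σ j := by
  intro i j hij hjm
  rcases eq_or_lt_of_le hij with h | h
  · subst h; exact le_refl _
  · exact (sig_lt hσmono i j h hjm).le

lemma sig_pos (hσ0 : 0 < σ 0) (hσmono : ∀ j, j + 1 < m → σ j < σ (j + 1)) :
    ∀ j, j < m → 0 < σ j := by
  intro j hj
  rcases Nat.eq_zero_or_pos j with h | h
  · subst h; exact hσ0
  · exact hσ0.trans (sig_lt hσmono 0 j h hj)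

end CRNR

namespace CRNR2
open CRNR

variable {m : ℕ} {σ ρ : ℕ → ℝ}

lemma cast_eq (x : ℝ) :
    (x:ℂ) * (1 + ∑ j ∈ Finset.range m, ((σ j * ρ j : ℝ):ℂ) / (((σ j:ℝ):ℂ) - (x:ℂ)))
      = ((g m σ ρ x : ℝ) : ℂ) := by
  simp only [g]
  push_cast
  rw [mul_add, mul_one, Finset.mul_sum]
  congr 1
  refine Finset.sum_congr rfl fun j _ => ?_
  ring

lemma expand (lam : ℂ) (hlam : ∀ j, j < m → lam ≠ ((σ j : ℝ):ℂ)) :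
    lam * (1 + ∑ j ∈ Finset.range m, ((σ j * ρ j : ℝ):ℂ) / (((σ j:ℝ):ℂ) - lam))
      = lam + ∑ j ∈ Finset.range m,
          ((σ j * ρ j : ℝ):ℂ) * (-1 + ((σ j:ℝ):ℂ) * (((σ j:ℝ):ℂ) - lam)⁻¹) := by
  rw [mul_add, mul_one, Finset.mul_sum]
  refine congrArg _ (Finset.sum_congr rfl fun j hj => ?_)
  have hne : ((σ j:ℝ):ℂ) - lam ≠ 0 :=
    sub_ne_zero.2 (Ne.symm (hlam j (Finset.mem_range.1 hj)))
  field_simp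
  ring

lemma im_eq (lam : ℂ) (hlam : ∀ j, j < m → lam ≠ ((σ j : ℝ):ℂ)) :
    (lam * (1 + ∑ j ∈ Finset.range m, ((σ j * ρ j : ℝ):ℂ) / (((σ j:ℝ):ℂ) - lam))).im
      = lam.im * (1 + ∑ j ∈ Finset.range m,
          σ j ^ 2 * ρ j / Complex.normSq (((σ j:ℝ):ℂ) - lam)) := by
  rw [expand lam hlam, Complex.add_im, Complex.im_sum]
  rw [mul_add, mul_one, Finset.mul_sum]
  congr 1
  refine Finset.sum_congr rfl fun j hj => ?_
  have h1 : (((σ j:ℝ):ℂ) - lam)⁻¹.im = lam.im / Complex.normSq (((σ j:ℝ):ℂ) - lam) := by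
    rw [Complex.inv_im, Complex.sub_im, Complex.ofReal_im]
    ring_nf
  simp [Complex.mul_im, Complex.add_im, Complex.add_re, Complex.ofReal_im, Complex.ofReal_re, h1]
  ring

end CRNR2

namespace CRNR3
open CRNR CRNR2

variable {m : ℕ} {σ ρ : ℕ → ℝ}

lemma root_real (hσ0 : 0 < σ 0) (hσmono : ∀ j, j + 1 < m → σ j < σ (j + 1))
    (hρ : ∀ j, j < m → 0 < ρ j) (a : ℝ) (ha : 0 ≤ a) (lam : ℂ)
    (hlam : ∀ j, j < m → lam ≠ ((σ j : ℝ):ℂ))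
    (heq : lam * (1 + ∑ j ∈ Finset.range m, ((σ j * ρ j : ℝ):ℂ) / (((σ j:ℝ):ℂ) - lam))
      = (a:ℂ)) :
    0 ≤ lam.re ∧ lam = ((lam.re : ℝ):ℂ) ∧ g m σ ρ lam.re = a := by
  have him0 : (lam * (1 + ∑ j ∈ Finset.range m,
      ((σ j * ρ j : ℝ):ℂ) / (((σ j:ℝ):ℂ) - lam))).im = 0 := by
    rw [heq, Complex.ofReal_im]
  rw [im_eq lam hlam] at him0
  have hS : 0 ≤ ∑ j ∈ Finset.range m,
      σ j ^ 2 * ρ j / Complex.normSq (((σ j:ℝ):ℂ) - lam) := by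
    refine Finset.sum_nonneg fun j hj => ?_
    exact div_nonneg (mul_nonneg (sq_nonneg _) (hρ j (Finset.mem_range.1 hj)).le)
      (Complex.normSq_nonneg _)
  have hbr : (0:ℝ) < 1 + ∑ j ∈ Finset.range m,
      σ j ^ 2 * ρ j / Complex.normSq (((σ j:ℝ):ℂ) - lam) := by linarith
  have him : lam.im = 0 := by
    by_contra h
    exact h (by
      have := mul_eq_zero.1 him0
      rcases this with h1 | h1
      · exact h1
      · exact absurd h1 hbr.ne')
  have hre : lam = ((lam.re : ℝ):ℂ) := Complex.ext rfl (by simp [him])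
  set x := lam.re with hx
  have hxne : ∀ j, j < m → x ≠ σ j := by
    intro j hj hxe
    exact hlam j hj (by rw [hre, hxe])
  have hg : g m σ ρ x = a := by
    have := heq
    rw [hre] at this
    rw [cast_eq (σ := σ) (ρ := ρ) x] at this
    exact_mod_cast this
  refine ⟨?_, hre, hg⟩
  by_contra hneg
  push_neg at hneg
  have hle : g m σ ρ x ≤ x := by
    simp only [g]
    have : ∑ j ∈ Finset.range m, σ j * ρ j * (x / (σ j - x)) ≤ 0 := by
      refine Finset.sum_nonpos fun j hj => ?_
      have hjm := Finset.mem_range.1 hj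
      have hσj := sig_pos hσ0 hσmono j hjm
      have hden : 0 < σ j - x := by linarith
      have : x / (σ j - x) ≤ 0 := div_nonpos_of_nonpos_of_nonneg hneg.le hden.le
      exact mul_nonpos_of_nonneg_of_nonpos (mul_nonneg hσj.le (hρ j hjm).le) this
    linarith
  linarith [hg ▸ hle]

end CRNR3

namespace CRNR4
open CRNR Set Filter

variable {m : ℕ} {σ ρ : ℕ → ℝ}

lemma hasDerivAt_g (x : ℝ) (hx : ∀ j, j < m → x ≠ σ j) :
    HasDerivAt (g m σ ρ)
      (1 + ∑ j ∈ Finset.range m, σ j ^ 2 * ρ j / (σ j - x) ^ 2) x := by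
  have hterm : ∀ j ∈ Finset.range m,
      HasDerivAt (fun y => σ j * ρ j * (y / (σ j - y)))
        (σ j ^ 2 * ρ j / (σ j - x) ^ 2) x := by
    intro j hj
    have hne : σ j - x ≠ 0 := sub_ne_zero.2 (Ne.symm (hx j (Finset.mem_range.1 hj)))
    have h1 : HasDerivAt (fun y : ℝ => y / (σ j - y))
        ((1 * (σ j - x) - x * (0 - 1)) / (σ j - x) ^ 2) x :=
      (hasDerivAt_id x).div ((hasDerivAt_const x (σ j)).sub (hasDerivAt_id x)) hne
    have h2 := h1.const_mul (σ j * ρ j)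
    rw [show σ j ^ 2 * ρ j / (σ j - x) ^ 2
        = σ j * ρ j * ((1 * (σ j - x) - x * (0 - 1)) / (σ j - x) ^ 2) by ring]
    exact h2
  have hsum := HasDerivAt.sum hterm
  have := (hasDerivAt_id x).add hsum
  exact this.congr_of_eventuallyEq (Filter.Eventually.of_forall fun y => by simp [g, Finset.sum_apply])

lemma strictMonoOn_g (hρ : ∀ j, j < m → 0 < ρ j) (s : Set ℝ)
    (hconv : Convex ℝ s) (hopen : IsOpen s)
    (hs : ∀ x ∈ s, ∀ j, j < m → x ≠ σ j) :
    StrictMonoOn (g m σ ρ) s := by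
  have hd : ∀ x ∈ s, HasDerivAt (g m σ ρ)
      (1 + ∑ j ∈ Finset.range m, σ j ^ 2 * ρ j / (σ j - x) ^ 2) x :=
    fun x hx => hasDerivAt_g x (hs x hx)
  refine strictMonoOn_of_deriv_pos hconv ?_ ?_
  · exact fun x hx => ((hd x hx).differentiableAt.continuousAt).continuousWithinAt
  · intro x hx
    rw [hopen.interior_eq] at hx
    rw [(hd x hx).deriv]
    have : 0 ≤ ∑ j ∈ Finset.range m, σ j ^ 2 * ρ j / (σ j - x) ^ 2 := by
      refine Finset.sum_nonneg fun j hj => ?_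
      exact div_nonneg (mul_nonneg (sq_nonneg _) (hρ j (Finset.mem_range.1 hj)).le)
        (sq_nonneg _)
    linarith

lemma continuousOn_g (s : Set ℝ) (hs : ∀ x ∈ s, ∀ j, j < m → x ≠ σ j) :
    ContinuousOn (g m σ ρ) s :=
  fun x hx => ((hasDerivAt_g x (hs x hx)).differentiableAt.continuousAt).continuousWithinAt

end CRNR4

namespace CRNR5
open CRNR CRNR4 Set Filter

theorem tendsto_inv_zero_atBot' : Tendsto (fun x : ℝ => x⁻¹) (nhdsWithin 0 (Set.Iio 0)) atBot := by
  have h1 : Filter.Tendsto (fun x : ℝ => -x) (nhdsWithin 0 (Set.Iio 0)) (nhdsWithin 0 (Set.Ioi 0)) := by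
    refine tendsto_nhdsWithin_of_tendsto_nhds_of_eventually_within _ ?_ ?_
    · have : Filter.Tendsto (fun x : ℝ => -x) (nhds 0) (nhds (-0 : ℝ)) := (continuous_neg).tendsto 0
      simpa using this.mono_left nhdsWithin_le_nhds
    · filter_upwards [self_mem_nhdsWithin] with x hx
      simpa using hx
  have h2 := tendsto_inv_nhdsGT_zero.comp h1
  have h3 := Filter.tendsto_neg_atTop_atBot.comp h2
  refine h3.congr fun x => ?_
  simp [Function.comp, inv_neg]

variable {m : ℕ} {σ ρ : ℕ → ℝ}

lemma g_split (k : ℕ) (hk : k < m) (x : ℝ) :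
    g m σ ρ x = (x + ∑ j ∈ (Finset.range m).erase k, σ j * ρ j * (x / (σ j - x)))
      + σ k * ρ k * (x / (σ k - x)) := by
  rw [g, add_assoc, Finset.sum_erase_add _ _ (Finset.mem_range.2 hk)]

lemma cont_part (hσmono : ∀ j, j + 1 < m → σ j < σ (j + 1)) (k : ℕ) (hk : k < m) :
    ContinuousAt (fun x => x + ∑ j ∈ (Finset.range m).erase k,
      σ j * ρ j * (x / (σ j - x))) (σ k) := by
  have hsum : ContinuousAt (fun x => ∑ j ∈ (Finset.range m).erase k,
      σ j * ρ j * (x / (σ j - x))) (σ k) := by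
    refine tendsto_finset_sum _ fun j hj => ?_
    have hjk : j ≠ k := (Finset.mem_erase.1 hj).1
    have hjm : j < m := Finset.mem_range.1 (Finset.mem_erase.1 hj).2
    have hne : σ j - σ k ≠ 0 := by
      rcases lt_or_gt_of_ne hjk with h | h
      · exact sub_ne_zero.2 (sig_lt hσmono j k h hk).ne
      · exact sub_ne_zero.2 (sig_lt hσmono k j h hjm).ne'
    exact (continuousAt_const.mul (continuousAt_id.div
      (continuousAt_const.sub continuousAt_id) hne)).tendsto
  exact continuousAt_id.add hsum

lemma tendsto_sub_left (k : ℕ) :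
    Tendsto (fun x : ℝ => σ k - x) (nhdsWithin (σ k) (Iio (σ k))) (nhdsWithin 0 (Ioi 0)) := by
  refine tendsto_nhdsWithin_of_tendsto_nhds_of_eventually_within _ ?_ ?_
  · have : Tendsto (fun x : ℝ => σ k - x) (nhds (σ k)) (nhds (σ k - σ k)) :=
      (continuous_const.sub continuous_id).tendsto (σ k)
    simpa using this.mono_left nhdsWithin_le_nhds
  · filter_upwards [self_mem_nhdsWithin] with x hx
    simpa using hx

lemma tendsto_sub_right (k : ℕ) :
    Tendsto (fun x : ℝ => σ k - x) (nhdsWithin (σ k) (Ioi (σ k))) (nhdsWithin 0 (Iio 0)) := by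
  refine tendsto_nhdsWithin_of_tendsto_nhds_of_eventually_within _ ?_ ?_
  · have : Tendsto (fun x : ℝ => σ k - x) (nhds (σ k)) (nhds (σ k - σ k)) :=
      (continuous_const.sub continuous_id).tendsto (σ k)
    simpa using this.mono_left nhdsWithin_le_nhds
  · filter_upwards [self_mem_nhdsWithin] with x hx
    simpa using hx

lemma tendsto_g_left (hσ0 : 0 < σ 0) (hσmono : ∀ j, j + 1 < m → σ j < σ (j + 1))
    (hρ : ∀ j, j < m → 0 < ρ j) (k : ℕ) (hk : k < m) :
    Tendsto (g m σ ρ) (nhdsWithin (σ k) (Iio (σ k))) atTop := by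
  have hσk := sig_pos hσ0 hσmono k hk
  have hinv := tendsto_inv_nhdsGT_zero.comp (tendsto_sub_left (σ := σ) k)
  have hx : Tendsto (fun x : ℝ => x) (nhdsWithin (σ k) (Iio (σ k))) (nhds (σ k)) :=
    tendsto_id.mono_left nhdsWithin_le_nhds
  have hmul1 : Tendsto (fun x : ℝ => x * (σ k - x)⁻¹) (nhdsWithin (σ k) (Iio (σ k))) atTop :=
    Filter.Tendsto.pos_mul_atTop hσk hx hinv
  have hmul2 : Tendsto (fun x : ℝ => σ k * ρ k * (x * (σ k - x)⁻¹))
      (nhdsWithin (σ k) (Iio (σ k))) atTop :=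
    Filter.Tendsto.pos_mul_atTop (mul_pos hσk (hρ k hk)) tendsto_const_nhds hmul1
  have hcont := ((cont_part (ρ := ρ) hσmono k hk).tendsto).mono_left
    (nhdsWithin_le_nhds (s := Iio (σ k)))
  have := Filter.Tendsto.add_atTop hcont hmul2
  refine this.congr fun x => ?_
  rw [g_split k hk, div_eq_mul_inv]

lemma tendsto_g_right (hσ0 : 0 < σ 0) (hσmono : ∀ j, j + 1 < m → σ j < σ (j + 1))
    (hρ : ∀ j, j < m → 0 < ρ j) (k : ℕ) (hk : k < m) :
    Tendsto (g m σ ρ) (nhdsWithin (σ k) (Ioi (σ k))) atBot := by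
  have hσk := sig_pos hσ0 hσmono k hk
  have hinv := tendsto_inv_zero_atBot'.comp (tendsto_sub_right (σ := σ) k)
  have hx : Tendsto (fun x : ℝ => x) (nhdsWithin (σ k) (Ioi (σ k))) (nhds (σ k)) :=
    tendsto_id.mono_left nhdsWithin_le_nhds
  have hmul1 : Tendsto (fun x : ℝ => x * (σ k - x)⁻¹) (nhdsWithin (σ k) (Ioi (σ k))) atBot :=
    Filter.Tendsto.pos_mul_atBot hσk hx hinv
  have hmul2 : Tendsto (fun x : ℝ => σ k * ρ k * (x * (σ k - x)⁻¹))
      (nhdsWithin (σ k) (Ioi (σ k))) atBot :=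
    Filter.Tendsto.pos_mul_atBot (mul_pos hσk (hρ k hk)) tendsto_const_nhds hmul1
  have hcont := ((cont_part (ρ := ρ) hσmono k hk).tendsto).mono_left
    (nhdsWithin_le_nhds (s := Ioi (σ k)))
  have := Filter.Tendsto.add_atBot hcont hmul2
  refine this.congr fun x => ?_
  rw [g_split k hk, div_eq_mul_inv]

lemma tendsto_g_atTop : Tendsto (g m σ ρ) atTop atTop := by
  have hterm : ∀ j : ℕ, Tendsto (fun x : ℝ => σ j * ρ j * (x / (σ j - x))) atTop
      (nhds (σ j * ρ j * (-1 + σ j * 0))) := by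
    intro j
    have ht : Tendsto (fun x : ℝ => x - σ j) atTop atTop :=
      tendsto_atTop_add_const_right _ _ tendsto_id
    have hinv : Tendsto (fun x : ℝ => (σ j - x)⁻¹) atTop (nhds 0) := by
      have h0 := ht.inv_tendsto_atTop
      have h1 := h0.neg
      rw [neg_zero] at h1
      refine h1.congr fun x => ?_
      rw [Pi.inv_apply, ← inv_neg, neg_sub]
    have h1 : Tendsto (fun x : ℝ => -1 + σ j * (σ j - x)⁻¹) atTop (nhds (-1 + σ j * 0)) :=
      tendsto_const_nhds.add (tendsto_const_nhds.mul hinv)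
    have h2 := tendsto_const_nhds.mul h1 (f := fun _ : ℝ => σ j * ρ j)
    refine h2.congr' ?_
    filter_upwards [Filter.eventually_gt_atTop (σ j)] with x hx
    have hne : σ j - x ≠ 0 := sub_ne_zero.2 (by linarith)
    field_simp
    ring
  have hsum : Tendsto (fun x : ℝ => ∑ j ∈ Finset.range m, σ j * ρ j * (x / (σ j - x)))
      atTop (nhds (∑ j ∈ Finset.range m, σ j * ρ j * (-1 + σ j * 0))) :=
    tendsto_finset_sum _ fun j _ => hterm j
  have := Filter.Tendsto.add_atTop hsum tendsto_id
  refine this.congr fun x => ?_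
  simp only [g, id_eq]
  exact add_comm _ _

end CRNR5

namespace CRNR6
open CRNR CRNR4 CRNR5 Set Filter

variable {m : ℕ} {σ ρ : ℕ → ℝ}

lemma g_zero : g m σ ρ 0 = 0 := by simp [g]

lemma ex0 (hσ0 : 0 < σ 0) (hσmono : ∀ j, j + 1 < m → σ j < σ (j + 1))
    (hρ : ∀ j, j < m → 0 < ρ j) (hm : 1 ≤ m) (a : ℝ) (ha : 0 ≤ a) :
    ∃ x ∈ Ico 0 (σ 0), g m σ ρ x = a := by
  have hT := tendsto_g_left hσ0 hσmono hρ 0 hm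
  have h1 : ∀ᶠ x in nhdsWithin (σ 0) (Iio (σ 0)), a ≤ g m σ ρ x :=
    hT.eventually (eventually_ge_atTop a)
  have h2 : Ioo 0 (σ 0) ∈ nhdsWithin (σ 0) (Iio (σ 0)) :=
    Ioo_mem_nhdsLT_of_mem ⟨hσ0, le_refl _⟩
  obtain ⟨t, ht1, ht2⟩ := (h1.and (eventually_of_mem h2 fun x hx => hx)).exists
  -- ht1 : a ≤ g t, ht2 : t ∈ Ioo 0 (σ 0)
  have hsub : ∀ x ∈ Icc (0:ℝ) t, ∀ j, j < m → x ≠ σ j := by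
    intro x hx j hj hxe
    have h5 : σ 0 ≤ σ j := sig_le hσmono 0 j (Nat.zero_le _) hj
    rw [hxe] at hx
    linarith [hx.2, ht2.2]
  have hcont := continuousOn_g (ρ := ρ) (Icc 0 t) hsub
  have hmem : a ∈ Icc (g m σ ρ 0) (g m σ ρ t) := by
    rw [g_zero]; exact ⟨ha, ht1⟩
  obtain ⟨x, hx1, hx2⟩ := intermediate_value_Icc ht2.1.le hcont hmem
  exact ⟨x, ⟨hx1.1, lt_of_le_of_lt hx1.2 ht2.2⟩, hx2⟩

lemma exmid (hσ0 : 0 < σ 0) (hσmono : ∀ j, j + 1 < m → σ j < σ (j + 1))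
    (hρ : ∀ j, j < m → 0 < ρ j) (k : ℕ) (hk : k + 1 < m) (a : ℝ) :
    ∃ x ∈ Ioo (σ k) (σ (k + 1)), g m σ ρ x = a := by
  have hkk : σ k < σ (k + 1) := hσmono k hk
  have hB := tendsto_g_right hσ0 hσmono hρ k (by omega)
  have h1 : ∀ᶠ x in nhdsWithin (σ k) (Ioi (σ k)), g m σ ρ x ≤ a :=
    hB.eventually (eventually_le_atBot a)
  have h2 : Ioo (σ k) (σ (k + 1)) ∈ nhdsWithin (σ k) (Ioi (σ k)) :=
    Ioo_mem_nhdsGT_of_mem ⟨le_refl _, hkk⟩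
  obtain ⟨t₁, ht11, ht12⟩ := (h1.and (eventually_of_mem h2 fun x hx => hx)).exists
  have hT := tendsto_g_left hσ0 hσmono hρ (k + 1) hk
  have h3 : ∀ᶠ x in nhdsWithin (σ (k + 1)) (Iio (σ (k + 1))), a ≤ g m σ ρ x :=
    hT.eventually (eventually_ge_atTop a)
  have h4 : Ioo t₁ (σ (k + 1)) ∈ nhdsWithin (σ (k + 1)) (Iio (σ (k + 1))) :=
    Ioo_mem_nhdsLT_of_mem ⟨ht12.2, le_refl _⟩
  obtain ⟨t₂, ht21, ht22⟩ := (h3.and (eventually_of_mem h4 fun x hx => hx)).exists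
  have hsub0 : ∀ x ∈ Icc t₁ t₂, x ∈ Ioo (σ k) (σ (k + 1)) := by
    intro x hx
    exact ⟨lt_of_lt_of_le ht12.1 hx.1, lt_of_le_of_lt hx.2 ht22.2⟩
  have hsub : ∀ x ∈ Icc t₁ t₂, ∀ j, j < m → x ≠ σ j := by
    intro x hx j hj hxe
    have hx' := hsub0 x hx
    rw [hxe] at hx'
    rcases le_or_gt j k with h | h
    · have : σ j ≤ σ k := sig_le hσmono j k h (by omega)
      linarith [hx'.1]
    · have : σ (k + 1) ≤ σ j := sig_le hσmono (k + 1) j h hj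
      linarith [hx'.2]
  have hcont := continuousOn_g (ρ := ρ) (Icc t₁ t₂) hsub
  have hmem : a ∈ Icc (g m σ ρ t₁) (g m σ ρ t₂) := ⟨ht11, ht21⟩
  obtain ⟨x, hx1, hx2⟩ := intermediate_value_Icc ht22.1.le hcont hmem
  exact ⟨x, hsub0 x hx1, hx2⟩

lemma exlast (hσ0 : 0 < σ 0) (hσmono : ∀ j, j + 1 < m → σ j < σ (j + 1))
    (hρ : ∀ j, j < m → 0 < ρ j) (hm : 1 ≤ m) (a : ℝ) :
    ∃ x ∈ Ioi (σ (m - 1)), g m σ ρ x = a := by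
  have hm1 : m - 1 < m := by omega
  have hB := tendsto_g_right hσ0 hσmono hρ (m - 1) hm1
  have h1 : ∀ᶠ x in nhdsWithin (σ (m - 1)) (Ioi (σ (m - 1))), g m σ ρ x ≤ a :=
    hB.eventually (eventually_le_atBot a)
  obtain ⟨t₁, ht11, ht12⟩ := (h1.and (eventually_of_mem self_mem_nhdsWithin fun x hx => hx)).exists
  have hT := tendsto_g_atTop (m := m) (σ := σ) (ρ := ρ)
  have h3 : ∀ᶠ x in atTop, a ≤ g m σ ρ x := hT.eventually (eventually_ge_atTop a)
  obtain ⟨t₂, ht21, ht22⟩ := (h3.and (eventually_gt_atTop t₁)).exists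
  have hsub0 : ∀ x ∈ Icc t₁ t₂, x ∈ Ioi (σ (m - 1)) := by
    intro x hx
    exact lt_of_lt_of_le ht12 hx.1
  have hsub : ∀ x ∈ Icc t₁ t₂, ∀ j, j < m → x ≠ σ j := by
    intro x hx j hj hxe
    have hx' := hsub0 x hx
    have : σ j ≤ σ (m - 1) := sig_le hσmono j (m - 1) (by omega) hm1
    rw [hxe] at hx'
    simp only [Set.mem_Ioi] at hx'
    linarith
  have hcont := continuousOn_g (ρ := ρ) (Icc t₁ t₂) hsub
  have hmem : a ∈ Icc (g m σ ρ t₁) (g m σ ρ t₂) := ⟨ht11, ht21⟩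
  obtain ⟨x, hx1, hx2⟩ := intermediate_value_Icc ht22.le hcont hmem
  exact ⟨x, hsub0 x hx1, hx2⟩

end CRNR6

namespace CRNR7
open CRNR CRNR2 CRNR3 CRNR4 CRNR5 CRNR6 Set Filter

variable {m : ℕ} {σ ρ : ℕ → ℝ}

lemma avoid_Iio (hσmono : ∀ j, j + 1 < m → σ j < σ (j + 1)) :
    ∀ x ∈ Iio (σ 0), ∀ j, j < m → x ≠ σ j := by
  intro x hx j hj hxe
  have : σ 0 ≤ σ j := sig_le hσmono 0 j (Nat.zero_le _) hj
  rw [hxe] at hx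
  simp only [Set.mem_Iio] at hx
  linarith

lemma avoid_Ioi (hσmono : ∀ j, j + 1 < m → σ j < σ (j + 1)) (hm : 1 ≤ m) :
    ∀ x ∈ Ioi (σ (m - 1)), ∀ j, j < m → x ≠ σ j := by
  intro x hx j hj hxe
  have : σ j ≤ σ (m - 1) := sig_le hσmono j (m - 1) (by omega) (by omega)
  rw [hxe] at hx
  simp only [Set.mem_Ioi] at hx
  linarith

lemma avoid_Ioo (hσmono : ∀ j, j + 1 < m → σ j < σ (j + 1)) (k : ℕ) (hk : k + 1 < m) :
    ∀ x ∈ Ioo (σ k) (σ (k + 1)), ∀ j, j < m → x ≠ σ j := by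
  intro x hx j hj hxe
  rw [hxe] at hx
  rcases le_or_gt j k with h | h
  · have : σ j ≤ σ k := sig_le hσmono j k h (by omega)
    linarith [hx.1]
  · have : σ (k + 1) ≤ σ j := sig_le hσmono (k + 1) j h hj
    linarith [hx.2]

lemma mem_S_iff (a : ℝ) (x : ℝ) (hx : ∀ j, j < m → x ≠ σ j) :
    ((x:ℂ) * (1 + ∑ j ∈ Finset.range m, ((σ j * ρ j : ℝ):ℂ) / (((σ j:ℝ):ℂ) - (x:ℂ)))
      = (a:ℂ)) ↔ g m σ ρ x = a := by
  rw [cast_eq (σ := σ) (ρ := ρ) x]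
  exact_mod_cast Iff.rfl

lemma count (hm : 1 ≤ m) (hσ0 : 0 < σ 0) (hσmono : ∀ j, j + 1 < m → σ j < σ (j + 1))
    (hρ : ∀ j, j < m → 0 < ρ j) (a : ℝ) (ha : 0 ≤ a) :
    {lam : ℂ | (∀ j, j < m → lam ≠ ((σ j : ℝ) : ℂ)) ∧
        lam * (1 + ∑ j ∈ Finset.range m, ((σ j * ρ j : ℝ):ℂ) / (((σ j:ℝ):ℂ) - lam))
          = (a:ℂ)}.ncard = m + 1 := by
  classical
  -- choose the roots
  obtain ⟨x0, hx0, hgx0⟩ := ex0 hσ0 hσmono hρ hm a ha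
  obtain ⟨xm, hxm, hgxm⟩ := exlast hσ0 hσmono hρ hm a
  have hmid' : ∀ k : ℕ, ∃ x : ℝ, k + 1 < m → (x ∈ Ioo (σ k) (σ (k+1)) ∧ g m σ ρ x = a) := by
    intro k
    by_cases hk : k + 1 < m
    · obtain ⟨x, h1, h2⟩ := exmid hσ0 hσmono hρ k hk a
      exact ⟨x, fun _ => ⟨h1, h2⟩⟩
    · exact ⟨0, fun h => absurd h hk⟩
  choose fmid hfmid using hmid'
  set r : ℕ → ℝ := fun k => if k = 0 then x0 else if k < m then fmid (k-1) else xm with hr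
  -- location of roots
  have hloc0 : r 0 = x0 := by simp [hr]
  have hlocm : r m = xm := by
    simp only [hr]
    rw [if_neg (by omega : ¬ m = 0), if_neg (by omega : ¬ m < m)]
  have hlocmid : ∀ k, 1 ≤ k → k < m → r k = fmid (k-1) := by
    intro k h1 h2
    simp only [hr]
    rw [if_neg (by omega : ¬ k = 0), if_pos h2]
  have hmidIoo : ∀ k, 1 ≤ k → k < m → r k ∈ Ioo (σ (k-1)) (σ k) := by
    intro k h1 h2
    rw [hlocmid k h1 h2]
    have := (hfmid (k-1) (by omega)).1
    have hke : k - 1 + 1 = k := by omega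
    rwa [hke] at this
  have hroot : ∀ k, k ≤ m → g m σ ρ (r k) = a := by
    intro k hk
    rcases Nat.eq_zero_or_pos k with h | h
    · subst h; rw [hloc0]; exact hgx0
    · rcases eq_or_lt_of_le hk with h2 | h2
      · subst h2; rw [hlocm]; exact hgxm
      · rw [hlocmid k h h2]
        have := (hfmid (k-1) (by omega)).2
        exact this
  have hlt : ∀ k, k < m → r k < σ k := by
    intro k hk
    rcases Nat.eq_zero_or_pos k with h | h
    · subst h; rw [hloc0]; exact hx0.2
    · exact (hmidIoo k h hk).2
  have hgt : ∀ k, 1 ≤ k → k ≤ m → σ (k-1) < r k := by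
    intro k h1 h2
    rcases eq_or_lt_of_le h2 with h | h
    · subst h; rw [hlocm]; exact hxm
    · exact (hmidIoo k h1 h).1
  have hrmono : ∀ k l, k < l → l ≤ m → r k < r l := by
    intro k l hkl hlm
    have h1 : r k < σ k := hlt k (by omega)
    have h2 : σ (l-1) < r l := hgt l (by omega) hlm
    have h3 : σ k ≤ σ (l-1) := sig_le hσmono k (l-1) (by omega) (by omega)
    linarith
  have hrpos : ∀ k, k ≤ m → 0 ≤ r k := by
    intro k hk
    rcases Nat.eq_zero_or_pos k with h | h
    · subst h; rw [hloc0]; exact hx0.1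
    · have := hgt k h hk
      have := sig_pos hσ0 hσmono (k-1) (by omega)
      linarith
  have hrne : ∀ k, k ≤ m → ∀ j, j < m → r k ≠ σ j := by
    intro k hk
    rcases Nat.eq_zero_or_pos k with h | h
    · subst h
      exact fun j hj => avoid_Iio hσmono (r 0) (by rw [hloc0]; exact hx0.2) j hj
    · rcases eq_or_lt_of_le hk with h2 | h2
      · intro j hj
        rw [h2]
        exact avoid_Ioi hσmono hm (r m) (by rw [hlocm]; exact hxm) j hj
      · intro j hj
        have hIoo := hmidIoo k h h2
        have hke : k - 1 + 1 = k := by omega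
        refine avoid_Ioo hσmono (k-1) (by omega) (r k) ?_ j hj
        rw [hke]
        exact hIoo
  -- the set equals the image of r
  set S := {lam : ℂ | (∀ j, j < m → lam ≠ ((σ j : ℝ) : ℂ)) ∧
        lam * (1 + ∑ j ∈ Finset.range m, ((σ j * ρ j : ℝ):ℂ) / (((σ j:ℝ):ℂ) - lam))
          = (a:ℂ)} with hS
  have hSeq : S = ↑((Finset.range (m+1)).image (fun k => ((r k : ℝ) : ℂ))) := by
    ext lam
    simp only [hS, Set.mem_setOf_eq, Finset.coe_image, Set.mem_image, Finset.mem_coe,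
      Finset.mem_range]
    constructor
    · rintro ⟨hlam, heq⟩
      obtain ⟨hre, hlamr, hg⟩ := root_real hσ0 hσmono hρ a ha lam hlam heq
      set x := lam.re with hxdef
      have hxne : ∀ j, j < m → x ≠ σ j := by
        intro j hj hxe
        exact hlam j hj (by rw [hlamr, hxe])
      -- find which interval x lies in, conclude x = r k
      have key : ∃ k, k < m + 1 ∧ r k = x := by
        by_cases hc1 : x < σ 0
        · refine ⟨0, by omega, ?_⟩
          have hsm := strictMonoOn_g (σ := σ) hρ (Iio (σ 0)) (convex_Iio _) isOpen_Iio
            (avoid_Iio hσmono)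
          have hx0' : r 0 ∈ Iio (σ 0) := by rw [hloc0]; exact hx0.2
          exact hsm.injOn hx0' hc1 (by rw [hroot 0 (by omega), hg])
        · by_cases hc2 : σ (m-1) < x
          · refine ⟨m, by omega, ?_⟩
            have hsm := strictMonoOn_g (σ := σ) hρ (Ioi (σ (m-1))) (convex_Ioi _) isOpen_Ioi
              (avoid_Ioi hσmono hm)
            have hxm' : r m ∈ Ioi (σ (m-1)) := by rw [hlocm]; exact hxm
            exact hsm.injOn hxm' hc2 (by rw [hroot m (by omega), hg])
          · push_neg at hc1 hc2
            have hx0lt : σ 0 < x := lt_of_le_of_ne hc1 (Ne.symm (hxne 0 hm))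
            have hxmlt : x < σ (m-1) := lt_of_le_of_ne hc2 (hxne (m-1) (by omega))
            set k := Nat.findGreatest (fun j => σ j < x) (m-1) with hkdef
            have hkP : σ k < x :=
              Nat.findGreatest_spec (P := fun j => σ j < x) (Nat.zero_le _) hx0lt
            have hkle : k ≤ m - 1 := Nat.findGreatest_le _
            have hknem : k ≠ m - 1 := by
              intro h
              rw [h] at hkP
              linarith
            have hk1m : k + 1 < m := by omega
            have hnP : ¬ σ (k+1) < x := by
              refine Nat.findGreatest_is_greatest (P := fun j => σ j < x) (k := k + 1)
                (n := m - 1) ?_ (by omega)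
              rw [← hkdef]
              omega
            have hxlt : x < σ (k+1) :=
              lt_of_le_of_ne (not_lt.1 hnP) (hxne (k+1) hk1m)
            refine ⟨k+1, by omega, ?_⟩
            have hsm := strictMonoOn_g (σ := σ) hρ (Ioo (σ k) (σ (k+1)))
              (convex_Ioo _ _) isOpen_Ioo (avoid_Ioo hσmono k hk1m)
            have hrk : r (k+1) ∈ Ioo (σ k) (σ (k+1)) := by
              have := hmidIoo (k+1) (by omega) (by omega)
              simpa using this
            exact hsm.injOn hrk ⟨hkP, hxlt⟩ (by rw [hroot (k+1) (by omega), hg])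
      obtain ⟨k, hk1, hk2⟩ := key
      exact ⟨k, hk1, by rw [hk2, ← hlamr]⟩
    · rintro ⟨k, hk, rfl⟩
      have hk' : k ≤ m := by omega
      refine ⟨?_, ?_⟩
      · intro j hj hje
        exact hrne k hk' j hj (by exact_mod_cast hje)
      · rw [mem_S_iff a (r k) (hrne k hk')]
        exact hroot k hk'
  rw [hSeq, Set.ncard_coe_finset]
  rw [Finset.card_image_of_injOn, Finset.card_range]
  intro k hk l hl hkl
  simp only [Finset.coe_range, Set.mem_Iio] at hk hl
  have hkl' : ((r k : ℝ) : ℂ) = ((r l : ℝ) : ℂ) := hkl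
  have : r k = r l := by exact_mod_cast hkl'
  by_contra hne
  rcases lt_or_gt_of_ne hne with h | h
  · exact absurd this (hrmono k l h (by omega)).ne
  · exact absurd this.symm (hrmono l k h (by omega)).ne

end CRNR7

theorem complex_roots_are_nonneg_real
    (m : ℕ) (hm : 1 ≤ m)
    (σ ρ : ℕ → ℝ)
    (hσ0 : 0 < σ 0)
    (hσmono : ∀ j, j + 1 < m → σ j < σ (j + 1))
    (hρ : ∀ j, j < m → 0 < ρ j)
    (F : ℂ → ℂ)
    (hF : ∀ lam : ℂ, F lam =
      1 + ∑ j ∈ Finset.range m, ((σ j * ρ j : ℝ) : ℂ) / (((σ j : ℝ) : ℂ) - lam)) :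
    (∀ a : ℝ, 0 ≤ a →
      {lam : ℂ | (∀ j, j < m → lam ≠ ((σ j : ℝ) : ℂ)) ∧ lam * F lam = (a : ℂ)}.ncard
          = m + 1 ∧
      ∀ lam ∈ {lam : ℂ | (∀ j, j < m → lam ≠ ((σ j : ℝ) : ℂ)) ∧ lam * F lam = (a : ℂ)},
        ∃ r : ℝ, 0 ≤ r ∧ lam = (r : ℂ)) ∧
    (∀ lam : ℂ, (∀ j, j < m → lam ≠ ((σ j : ℝ) : ℂ)) →
      (∃ c : ℝ, 0 ≤ c ∧ lam * F lam = (c : ℂ)) →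
      ∃ r : ℝ, 0 ≤ r ∧ lam = (r : ℂ)) := by
  have hset : ∀ a : ℝ,
      {lam : ℂ | (∀ j, j < m → lam ≠ ((σ j : ℝ) : ℂ)) ∧ lam * F lam = (a : ℂ)}
        = {lam : ℂ | (∀ j, j < m → lam ≠ ((σ j : ℝ) : ℂ)) ∧
            lam * (1 + ∑ j ∈ Finset.range m,
              ((σ j * ρ j : ℝ) : ℂ) / (((σ j : ℝ) : ℂ) - lam)) = (a : ℂ)} := by
    intro a
    ext lam
    simp only [Set.mem_setOf_eq, hF lam]
  constructor
  · intro a ha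
    constructor
    · rw [hset a]
      exact CRNR7.count hm hσ0 hσmono hρ a ha
    · intro lam hlam
      rw [hset a] at hlam
      obtain ⟨h1, h2⟩ := hlam
      obtain ⟨hre, hlamr, _⟩ := CRNR3.root_real hσ0 hσmono hρ a ha lam h1 h2
      exact ⟨lam.re, hre, hlamr⟩
  · rintro lam h1 ⟨c, hc, h2⟩
    rw [hF lam] at h2
    obtain ⟨hre, hlamr, _⟩ := CRNR3.root_real hσ0 hσmono hρ c hc lam h1 h2
    exact ⟨lam.re, hre, hlamr⟩
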